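/- Fix α ∈ (0,1] and a discount sequence (γ_t)_{t≥1} with Σ_{t=1}^∞ γ_t = 1. Then there exists a probability space and nonnegative random variables (E_t)_{t≥1} with E[E_t] ≤ 1 for every t (so every hypothesis is null, H₀ = ℕ), such that for every ε > 0 there exists t' ∈ ℕ with: for all t ≥ t', the e-LOND discovery sets satisfy FDR(R_t) = E[|R_t ∩ H₀| / max(|R_t|, 1)] > α − ε. (Concretely, one may take the distribution where with probability α·γ_s the event ξ_s occurs on which E_s = 1/(α·γ_s) and E_i = 0 for i ≠ s, and with probability 1 − α all E_i = 0; then FDR(R_t) = α·Σ_{s=1}^t γ_s.) -/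

import Mathlib

open MeasureTheory

/-- The e-LOND discovery sets: `R 0 = ∅`, test level `α_t = α·γ_t·(|R_{t-1}|+1)`,
and `R_t = R_{t-1} ∪ {t}` iff `E_t ≥ 1/α_t` (no rejection when `α_t = 0`). -/
noncomputable def eLOND {Ω : Type*} (α : ℝ) (γ : ℕ → ℝ) (E : ℕ → Ω → ℝ) :
    ℕ → Ω → Finset ℕ
  | 0 => fun _ => ∅
  | t + 1 => fun ω =>
    let R := eLOND α γ E t ω
    let lvl := α * γ (t + 1) * ((R.card : ℝ) + 1)
    if 0 < lvl ∧ 1 / lvl ≤ E (t + 1) ω then insert (t + 1) R else R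

lemma eLOND_succ {Ω : Type*} (α : ℝ) (γ : ℕ → ℝ) (E : ℕ → Ω → ℝ) (t : ℕ) (ω : Ω) :
    eLOND α γ E (t + 1) ω =
      if 0 < α * γ (t + 1) * (((eLOND α γ E t ω).card : ℝ) + 1) ∧
          1 / (α * γ (t + 1) * (((eLOND α γ E t ω).card : ℝ) + 1)) ≤ E (t + 1) ω
        then insert (t + 1) (eLOND α γ E t ω) else eLOND α γ E t ω := rfl

noncomputable def auxE (α : ℝ) (γ : ℕ → ℝ) : ℕ → ℕ → ℝ := fun t ω =>
  if t = ω ∧ 1 ≤ t ∧ 0 < γ t then (α * γ t)⁻¹ else 0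

lemma eLOND_auxE (α : ℝ) (hα : 0 < α) (γ : ℕ → ℝ) (t ω : ℕ) :
    eLOND α γ (auxE α γ) t ω = if 1 ≤ ω ∧ ω ≤ t ∧ 0 < γ ω then {ω} else ∅ := by
  induction t with
  | zero =>
      have h : ¬(1 ≤ ω ∧ ω = 0 ∧ 0 < γ ω) := by rintro ⟨h1, h2, -⟩; omega
      simp [eLOND, h]
  | succ t ih =>
      rw [eLOND_succ, ih]
      by_cases hP : 1 ≤ ω ∧ ω ≤ t ∧ 0 < γ ω
      · rw [if_pos hP]
        have hE : auxE α γ (t + 1) ω = 0 := by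
          apply if_neg; rintro ⟨h1, -, -⟩; omega
        rw [if_neg, if_pos ⟨hP.1, Nat.le_succ_of_le hP.2.1, hP.2.2⟩]
        rintro ⟨hl, hle⟩
        rw [hE] at hle
        have : 0 < 1 / (α * γ (t + 1) * (((({ω} : Finset ℕ)).card : ℝ) + 1)) :=
          div_pos one_pos hl
        linarith
      · rw [if_neg hP]
        by_cases hω : ω = t + 1 ∧ 0 < γ (t + 1)
        · have hE : auxE α γ (t + 1) ω = (α * γ (t + 1))⁻¹ := by
            apply if_pos; exact ⟨hω.1.symm, Nat.le_add_left 1 t, hω.2⟩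
          have hcard : (((∅ : Finset ℕ)).card : ℝ) + 1 = 1 := by simp
          have hlvl : α * γ (t + 1) * (((∅ : Finset ℕ).card : ℝ) + 1) = α * γ (t + 1) := by
            rw [hcard, mul_one]
          rw [if_pos, if_pos ⟨by omega, by omega, hω.1 ▸ hω.2⟩]
          · rw [hω.1]; simp
          · constructor
            · rw [hlvl]; exact mul_pos hα hω.2
            · rw [hlvl, hE, one_div]
        · have hE : auxE α γ (t + 1) ω = 0 := by
            apply if_neg; rintro ⟨h1, -, h3⟩; exact hω ⟨h1.symm, h3⟩
          rw [if_neg, if_neg]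
          · rintro ⟨h1, h2, h3⟩
            rcases Nat.lt_or_ge ω (t + 1) with h | h
            · exact hP ⟨h1, by omega, h3⟩
            · have : ω = t + 1 := by omega
              exact hω ⟨this, this ▸ h3⟩
          · rintro ⟨hl, hle⟩
            rw [hE] at hle
            have : 0 < 1 / (α * γ (t + 1) * (((∅ : Finset ℕ).card : ℝ) + 1)) :=
              div_pos one_pos hl
            linarith

/-- **The FDR control of e-LOND is sharp.** Fix `α ∈ (0,1]` and a discount sequence
`(γ_t)_{t≥1}` with `Σ_{t≥1} γ_t = 1`. Then there exist a probability space and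
nonnegative random variables `(E_t)_{t≥1}` with `𝔼[E_t] ≤ 1` for every `t` (so every
hypothesis is null, `H₀ = ℕ`) such that for every `ε > 0` there is a `t'` with:
for all `t ≥ t'`, the e-LOND discovery sets satisfy
`FDR(R_t) = 𝔼[|R_t| / max(|R_t|,1)] > α − ε`. -/
theorem eLOND_fdr_sharp
    (α : ℝ) (hα0 : 0 < α) (hα1 : α ≤ 1)
    (γ : ℕ → ℝ) (hγ0 : ∀ t, 0 ≤ γ t) (hγ1 : ∑' t : ℕ, γ (t + 1) = 1) :
    ∃ (Ω : Type) (_ : MeasurableSpace Ω) (μ : Measure Ω) (_ : IsProbabilityMeasure μ)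
      (E : ℕ → Ω → ℝ),
      (∀ t, Measurable (E t)) ∧ (∀ t ω, 0 ≤ E t ω) ∧
      (∀ t, ∫⁻ ω, ENNReal.ofReal (E t ω) ∂μ ≤ 1) ∧
      ∀ ε : ℝ, 0 < ε → ∃ t' : ℕ, ∀ t, t' ≤ t →
        α - ε < ∫ ω, ((eLOND α γ E t ω).card : ℝ) /
          max ((eLOND α γ E t ω).card : ℝ) 1 ∂μ := by
  classical
  have hsum : Summable (fun u : ℕ => γ (u + 1)) := by
    by_contra h
    rw [tsum_eq_zero_of_not_summable h] at hγ1
    norm_num at hγ1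
  set f : ℕ → ENNReal := fun s =>
    ENNReal.ofReal (if s = 0 then 1 - α else α * γ s) with hf
  set μ : Measure ℕ := Measure.sum (fun s => f s • Measure.dirac s) with hμ
  have htsumf : ∑' s, f s = 1 := by
    rw [tsum_eq_zero_add' ENNReal.summable]
    have h1 : ∑' (u : ℕ), f (u + 1) = ENNReal.ofReal α := by
      have h2 : ∀ u : ℕ, f (u + 1) = ENNReal.ofReal (α * γ (u + 1)) := by
        intro u; simp [hf]
      simp only [h2]
      rw [← ENNReal.ofReal_tsum_of_nonneg (fun u => mul_nonneg hα0.le (hγ0 _))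
        (by exact hsum.mul_left α)]
      rw [tsum_mul_left, hγ1, mul_one]
    rw [h1]
    have h0 : f 0 = ENNReal.ofReal (1 - α) := by simp [hf]
    rw [h0]
    rw [← ENNReal.ofReal_add (by linarith) (le_of_lt hα0)]
    norm_num
  have hprob : IsProbabilityMeasure μ := by
    constructor
    rw [hμ, Measure.sum_apply _ MeasurableSet.univ]
    simp only [Measure.smul_apply, Measure.dirac_apply_of_mem (Set.mem_univ _),
      smul_eq_mul, mul_one]
    exact htsumf
  refine ⟨ℕ, inferInstance, μ, hprob, auxE α γ, fun t => measurable_of_countable _, ?_, ?_, ?_⟩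
  · intro t ω
    unfold auxE
    split
    · exact inv_nonneg.mpr (mul_nonneg hα0.le (hγ0 _))
    · exact le_refl 0
  · intro t
    have hlint : ∫⁻ ω, ENNReal.ofReal (auxE α γ t ω) ∂μ
        = ∑' s, f s * ENNReal.ofReal (auxE α γ t s) := by
      rw [hμ, lintegral_sum_measure]
      congr 1
      funext s
      rw [lintegral_smul_measure, lintegral_dirac, smul_eq_mul]
    rw [hlint]
    rw [tsum_eq_single t (fun s hs => ?_)]
    · by_cases ht : t = 0
      · subst ht
        have : auxE α γ 0 0 = 0 := by
          apply if_neg; rintro ⟨-, h1, -⟩; omega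
        simp [this]
      · by_cases hγt : 0 < γ t
        · have hEt : auxE α γ t t = (α * γ t)⁻¹ := by
            apply if_pos; exact ⟨rfl, by omega, hγt⟩
          have hft : f t = ENNReal.ofReal (α * γ t) := by simp [hf, ht]
          rw [hEt, hft, ← ENNReal.ofReal_mul (mul_nonneg hα0.le (hγ0 t))]
          rw [mul_inv_cancel₀ (by positivity)]
          simp
        · have hEt : auxE α γ t t = 0 := by
            apply if_neg; rintro ⟨-, -, h⟩; exact hγt h
          simp [hEt]
    · have : auxE α γ t s = 0 := by
        apply if_neg; rintro ⟨h, -, -⟩; exact hs (h ▸ rfl)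
      simp [this]
  · intro ε hε
    have hten : Filter.Tendsto (fun n => α * ∑ u ∈ Finset.range n, γ (u + 1))
        Filter.atTop (nhds α) := by
      have h1 := hsum.hasSum.tendsto_sum_nat
      rw [hγ1] at h1
      have h2 := h1.const_mul α
      simpa using h2
    have hev : ∀ᶠ t in Filter.atTop, α - ε < α * ∑ u ∈ Finset.range t, γ (u + 1) :=
      hten.eventually (eventually_gt_nhds (by linarith))
    obtain ⟨t', ht'⟩ := Filter.eventually_atTop.mp hev
    refine ⟨t', fun t ht => ?_⟩
    set S : Set ℕ := {ω : ℕ | 1 ≤ ω ∧ ω ≤ t ∧ 0 < γ ω} with hS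
    have hSm : MeasurableSet S := MeasurableSet.of_discrete
    have hfun : (fun ω : ℕ => ((eLOND α γ (auxE α γ) t ω).card : ℝ) /
        max ((eLOND α γ (auxE α γ) t ω).card : ℝ) 1)
        = S.indicator (fun _ => (1 : ℝ)) := by
      funext ω
      rw [eLOND_auxE α hα0 γ t ω]
      by_cases h : 1 ≤ ω ∧ ω ≤ t ∧ 0 < γ ω
      · have hmem : ω ∈ S := h
        rw [if_pos h, Set.indicator_of_mem hmem]
        norm_num
      · have hmem : ω ∉ S := h
        rw [if_neg h, Set.indicator_of_notMem hmem]
        norm_num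
    rw [hfun, integral_indicator_const (1 : ℝ) hSm, smul_eq_mul, mul_one]
    have hμS : μ S = ∑' s, f s * S.indicator 1 s := by
      rw [hμ, Measure.sum_apply _ hSm]
      simp only [Measure.smul_apply, smul_eq_mul, Measure.dirac_apply' _ hSm]
    have hsupp : ∀ b ∉ Finset.range (t + 1), f b * S.indicator 1 b = 0 := by
      intro b hb
      rw [Finset.mem_range] at hb
      have : b ∉ S := by rintro ⟨-, h2, -⟩; omega
      rw [Set.indicator_of_notMem this, mul_zero]
    have hfin : μ S = ∑ s ∈ Finset.range (t + 1), f s * S.indicator 1 s := by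
      rw [hμS, tsum_eq_sum hsupp]
    have htr : (μ S).toReal = α * ∑ u ∈ Finset.range t, γ (u + 1) := by
      rw [hfin, ENNReal.toReal_sum (fun a _ => ?_), Finset.sum_range_succ']
      · have h0 : (f 0 * S.indicator 1 0).toReal = 0 := by
          have : (0 : ℕ) ∉ S := by rintro ⟨h1, -, -⟩; omega
          rw [Set.indicator_of_notMem this, mul_zero]
          simp
        rw [h0, add_zero, Finset.mul_sum]
        refine Finset.sum_congr rfl fun u hu => ?_
        rw [Finset.mem_range] at hu
        have hfu : f (u + 1) = ENNReal.ofReal (α * γ (u + 1)) := by simp [hf]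
        by_cases hg : 0 < γ (u + 1)
        · have hmem : u + 1 ∈ S := ⟨by omega, by omega, hg⟩
          rw [Set.indicator_of_mem hmem, hfu, Pi.one_apply, mul_one,
            ENNReal.toReal_ofReal (mul_nonneg hα0.le (hγ0 _))]
        · have hg0 : γ (u + 1) = 0 := le_antisymm (not_lt.mp hg) (hγ0 _)
          have hmem : u + 1 ∉ S := by rintro ⟨-, -, h⟩; exact hg h
          rw [Set.indicator_of_notMem hmem, mul_zero, hg0, mul_zero]
          simp
      · by_cases hmem : a ∈ S
        · rw [Set.indicator_of_mem hmem, Pi.one_apply, mul_one]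
          cases a with
          | zero => simp [hf]
          | succ u => simp [hf]
        · rw [Set.indicator_of_notMem hmem, mul_zero]
          exact ENNReal.zero_ne_top
    change α - ε < (μ S).toReal
    rw [htr]
    exact ht' t ht
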